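/- Under the hypotheses of the explicit function theorem (u₊, u₋ convex with ∂u₊(Λ) ⊂ Ω̄₊, ∂u₋(Λ) ⊂ Ω̄₋, the compact sets Ω̄₊ and Ω̄₋ strongly separated by the hyperplane {xⁿ = a₀} with spacing d₀), the functions h₊(x') := −u*_{x'}(a₀ − d₀)/(2d₀) and h₋(x') := −u*_{x'}(a₀ + d₀)/(2d₀), defined for x' in the projection of Λ and +∞ elsewhere, are both convex functions on ℝ^{n−1} which are finite on the projection Λ' of Λ. In particular, the interface function h = h₊ − h₋ is a DC (difference of convex) function on Λ'. -/

import Mathlib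

open Set

noncomputable section

/-- The subdifferential of `f : ℝⁿ → ℝ` at `x`. -/
def subdiff {n : ℕ} (f : EuclideanSpace ℝ (Fin n) → ℝ) (x : EuclideanSpace ℝ (Fin n)) :
    Set (EuclideanSpace ℝ (Fin n)) :=
  {p | ∀ y, f x + inner ℝ p (y - x) ≤ f y}

/-- Append a last coordinate `t` to `x' ∈ ℝⁿ`, giving a point of `ℝⁿ⁺¹`. -/
def snocPt {n : ℕ} (x' : EuclideanSpace ℝ (Fin n)) (t : ℝ) :
    EuclideanSpace ℝ (Fin (n + 1)) :=
  (EuclideanSpace.equiv (Fin (n + 1)) ℝ).symm (Fin.snoc (fun i => x' i) t)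

/-- Projection onto the first `n` coordinates. -/
def projPt {n : ℕ} (x : EuclideanSpace ℝ (Fin (n + 1))) : EuclideanSpace ℝ (Fin n) :=
  (EuclideanSpace.equiv (Fin n) ℝ).symm (fun i => x i.castSucc)

/-- The partial Legendre transform, in the last variable, of `u = max {u₊, u₋}`. -/
def Lstar {n : ℕ} (up um : EuclideanSpace ℝ (Fin (n + 1)) → ℝ)
    (x' : EuclideanSpace ℝ (Fin n)) (s : ℝ) : ℝ :=
  sSup (Set.range fun t : ℝ => t * s - max (up (snocPt x' t)) (um (snocPt x' t)))

lemma snocPt_projPt {n : ℕ} (x : EuclideanSpace ℝ (Fin (n+1))) :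
    snocPt (projPt x) (x (Fin.last n)) = x := by
  ext i
  cases i using Fin.lastCases with
  | last => simp [snocPt]
  | cast i => simp [snocPt, projPt]

lemma snocPt_comb {n : ℕ} (x' y' : EuclideanSpace ℝ (Fin n)) (t₁ t₂ a b : ℝ) :
    snocPt (a • x' + b • y') (a * t₁ + b * t₂) = a • snocPt x' t₁ + b • snocPt y' t₂ := by
  ext i
  cases i using Fin.lastCases with
  | last => simp [snocPt]
  | cast i => simp [snocPt]

lemma inner_snoc_sub {n : ℕ} (p : EuclideanSpace ℝ (Fin (n+1))) (x' : EuclideanSpace ℝ (Fin n))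
    (t t₀ : ℝ) :
    (inner ℝ p (snocPt x' t - snocPt x' t₀) : ℝ) = p (Fin.last n) * (t - t₀) := by
  rw [PiLp.inner_apply, Fin.sum_univ_castSucc]
  simp [snocPt, RCLike.inner_apply, mul_comm]

lemma mul_csSup_le {f : ℝ → ℝ} {a C : ℝ} (ha : 0 ≤ a) (h : ∀ t, a * f t ≤ C) :
    a * sSup (Set.range f) ≤ C := by
  rcases ha.lt_or_eq with ha' | ha'
  · have hsup : sSup (Set.range f) ≤ C / a := by
      refine csSup_le (Set.range_nonempty f) ?_
      rintro v ⟨t, rfl⟩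
      rw [le_div_iff₀ ha', mul_comm]
      exact h t
    calc a * sSup (Set.range f) ≤ a * (C / a) := mul_le_mul_of_nonneg_left hsup ha
      _ = C := by field_simp
  · subst ha'
    rw [zero_mul]
    simpa using h 0

lemma exists_subgradient {m : ℕ} {f : EuclideanSpace ℝ (Fin m) → ℝ}
    (hf : ConvexOn ℝ Set.univ f) (x : EuclideanSpace ℝ (Fin m)) :
    ∃ p, p ∈ subdiff f x := by
  classical
  have hcont : Continuous f := hf.locallyLipschitz.continuous
  set A : Set (EuclideanSpace ℝ (Fin m) × ℝ) := {q | f q.1 < q.2} with hA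
  have hopen : IsOpen A := isOpen_lt (hcont.comp continuous_fst) continuous_snd
  have hconv : Convex ℝ A := by
    rintro q1 hq1 q2 hq2 a b ha hb hab
    have hcc : f (a • q1.1 + b • q2.1) ≤ a * f q1.1 + b * f q2.1 :=
      hf.2 (mem_univ q1.1) (mem_univ q2.1) ha hb hab
    simp only [hA, mem_setOf_eq] at hq1 hq2 ⊢
    have h1' : (a • q1 + b • q2).1 = a • q1.1 + b • q2.1 := rfl
    have h2' : (a • q1 + b • q2).2 = a * q1.2 + b * q2.2 := rfl
    rw [h1', h2']
    rcases ha.lt_or_eq with ha' | ha'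
    · have h1 : a * f q1.1 < a * q1.2 := mul_lt_mul_of_pos_left hq1 ha'
      have h2 : b * f q2.1 ≤ b * q2.2 := mul_le_mul_of_nonneg_left hq2.le hb
      linarith
    · have hb' : b = 1 := by linarith
      have h2 : b * f q2.1 < b * q2.2 := by rw [hb']; simpa using hq2
      have h1 : a * f q1.1 ≤ a * q1.2 := by rw [← ha']; simp
      linarith
  have hxA : ((x, f x) : EuclideanSpace ℝ (Fin m) × ℝ) ∉ A := by simp [hA]
  obtain ⟨F, hF⟩ := geometric_hahn_banach_point_open hconv hopen hxA
  set c := F ((0 : EuclideanSpace ℝ (Fin m)), (1 : ℝ)) with hc_def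
  have Fdec : ∀ (y : EuclideanSpace ℝ (Fin m)) (r : ℝ), F (y, r) = F (y, 0) + r * c := by
    intro y r
    have h : ((y, r) : EuclideanSpace ℝ (Fin m) × ℝ)
        = (y, (0:ℝ)) + r • ((0 : EuclideanSpace ℝ (Fin m)), (1:ℝ)) := by
      simp [Prod.ext_iff]
    rw [h, map_add, map_smul, smul_eq_mul]
  have hc : 0 < c := by
    have h1 := hF ((x, f x + 1)) (by simp [hA])
    rw [Fdec x (f x + 1), Fdec x (f x)] at h1
    linarith
  have key : ∀ y : EuclideanSpace ℝ (Fin m), F (x, 0) + f x * c ≤ F (y, 0) + f y * c := by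
    intro y
    refine le_of_forall_pos_le_add (fun ε hε => ?_)
    have h1 := hF ((y, f y + ε / c)) (by simp [hA]; positivity)
    rw [Fdec x (f x), Fdec y (f y + ε / c)] at h1
    have h2 : (f y + ε / c) * c = f y * c + ε := by field_simp
    linarith
  refine ⟨(InnerProductSpace.toDual ℝ (EuclideanSpace ℝ (Fin m))).symm
      (-(c⁻¹) • (F.comp (ContinuousLinearMap.inl ℝ (EuclideanSpace ℝ (Fin m)) ℝ))), fun y => ?_⟩
  have hinner : (inner ℝ ((InnerProductSpace.toDual ℝ (EuclideanSpace ℝ (Fin m))).symm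
      (-(c⁻¹) • (F.comp (ContinuousLinearMap.inl ℝ (EuclideanSpace ℝ (Fin m)) ℝ)))) (y - x) : ℝ)
      = -(c⁻¹) * (F (y, 0) - F (x, 0)) := by
    rw [InnerProductSpace.toDual_symm_apply]
    have h : (F.comp (ContinuousLinearMap.inl ℝ (EuclideanSpace ℝ (Fin m)) ℝ)) (y - x)
        = F (y, 0) - F (x, 0) := by
      rw [map_sub]; rfl
    simp only [ContinuousLinearMap.coe_smul', Pi.smul_apply, h, smul_eq_mul]
  rw [hinner]
  have h4 : (-(F (y,0) - F (x,0)))/c ≤ f y - f x := (div_le_iff₀ hc).2 (by linarith [key y])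
  have h5 : -(c⁻¹) * (F (y,0) - F (x,0)) = (-(F (y,0) - F (x,0)))/c := by ring
  linarith

lemma convex_piece {n : ℕ} (up um : EuclideanSpace ℝ (Fin (n + 1)) → ℝ)
    (hup : ConvexOn ℝ univ up) (hum : ConvexOn ℝ univ um)
    (Λ' : Set (EuclideanSpace ℝ (Fin n))) (hΛ' : Convex ℝ Λ') (s d₀ : ℝ) (hd₀ : 0 < d₀)
    (hbdd : ∀ x' ∈ Λ', BddAbove (Set.range fun t : ℝ =>
        t * s - max (up (snocPt x' t)) (um (snocPt x' t)))) :
    ConvexOn ℝ Λ' (fun x' => -(Lstar up um x' s) / (2 * d₀)) := by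
  refine ⟨hΛ', fun x' hx y' hy a b ha hb hab => ?_⟩
  have hz : a • x' + b • y' ∈ Λ' := hΛ' hx hy ha hb hab
  set g : EuclideanSpace ℝ (Fin n) → ℝ → ℝ :=
    fun w t => t * s - max (up (snocPt w t)) (um (snocPt w t)) with hg
  have main : ∀ t₁ t₂ : ℝ, a * g x' t₁ + b * g y' t₂ ≤ Lstar up um (a • x' + b • y') s := by
    intro t₁ t₂
    have h1 : g (a • x' + b • y') (a * t₁ + b * t₂) ≤ Lstar up um (a • x' + b • y') s :=
      le_csSup (hbdd _ hz) ⟨a * t₁ + b * t₂, rfl⟩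
    have hcomb : snocPt (a • x' + b • y') (a * t₁ + b * t₂)
        = a • snocPt x' t₁ + b • snocPt y' t₂ := snocPt_comb x' y' t₁ t₂ a b
    have h2 : max (up (snocPt (a • x' + b • y') (a * t₁ + b * t₂)))
        (um (snocPt (a • x' + b • y') (a * t₁ + b * t₂)))
        ≤ a * max (up (snocPt x' t₁)) (um (snocPt x' t₁))
          + b * max (up (snocPt y' t₂)) (um (snocPt y' t₂)) := by
      rw [hcomb]
      refine max_le ?_ ?_
      · calc up (a • snocPt x' t₁ + b • snocPt y' t₂)
            ≤ a * up (snocPt x' t₁) + b * up (snocPt y' t₂) :=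
              hup.2 (mem_univ _) (mem_univ _) ha hb hab
          _ ≤ a * max (up (snocPt x' t₁)) (um (snocPt x' t₁))
              + b * max (up (snocPt y' t₂)) (um (snocPt y' t₂)) := by
              gcongr <;> [exact le_max_left _ _; exact le_max_left _ _]
      · calc um (a • snocPt x' t₁ + b • snocPt y' t₂)
            ≤ a * um (snocPt x' t₁) + b * um (snocPt y' t₂) :=
              hum.2 (mem_univ _) (mem_univ _) ha hb hab
          _ ≤ a * max (up (snocPt x' t₁)) (um (snocPt x' t₁))
              + b * max (up (snocPt y' t₂)) (um (snocPt y' t₂)) := by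
              gcongr <;> [exact le_max_right _ _; exact le_max_right _ _]
    simp only [hg] at h1 ⊢
    nlinarith [h1, h2]
  have stepA : ∀ t₂ : ℝ, a * Lstar up um x' s + b * g y' t₂
      ≤ Lstar up um (a • x' + b • y') s := by
    intro t₂
    have h := mul_csSup_le (f := fun t₁ => g x' t₁) ha
      (C := Lstar up um (a • x' + b • y') s - b * g y' t₂) (fun t₁ => by linarith [main t₁ t₂])
    have hL : Lstar up um x' s = sSup (Set.range fun t₁ => g x' t₁) := rfl
    rw [hL]; linarith
  have key : a * Lstar up um x' s + b * Lstar up um y' s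
      ≤ Lstar up um (a • x' + b • y') s := by
    have h := mul_csSup_le (f := fun t₂ => g y' t₂) hb
      (C := Lstar up um (a • x' + b • y') s - a * Lstar up um x' s)
      (fun t₂ => by linarith [stepA t₂])
    have hL : Lstar up um y' s = sSup (Set.range fun t₂ => g y' t₂) := rfl
    rw [hL]; linarith
  have h2d : (0:ℝ) < 2 * d₀ := by linarith
  simp only [smul_eq_mul]
  rw [show a * (-(Lstar up um x' s) / (2 * d₀)) + b * (-(Lstar up um y' s) / (2 * d₀))
      = -(a * Lstar up um x' s + b * Lstar up um y' s) / (2 * d₀) by ring]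
  exact div_le_div_of_nonneg_right (by linarith) h2d.le

/-- Explicit function theorem, convexity of the pieces `h₊`, `h₋`: the partial Legendre
transforms of `u = max {u₊, u₋}` at heights `a₀ ∓ d₀` are finite on the projection `Λ'` of
`Λ`, and the functions `h₊ = −u*_{x'}(a₀−d₀)/(2d₀)` and `h₋ = −u*_{x'}(a₀+d₀)/(2d₀)` are
convex on `Λ'`; in particular the interface `h = h₊ − h₋` is a DC function on `Λ'`. -/
theorem explicit_function_convex_pieces (n : ℕ)
    (up um : EuclideanSpace ℝ (Fin (n + 1)) → ℝ)
    (Λ Ωp Ωm : Set (EuclideanSpace ℝ (Fin (n + 1))))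
    (hup : ConvexOn ℝ univ up) (hum : ConvexOn ℝ univ um)
    (hΛ : Convex ℝ Λ) (hΩp : IsCompact Ωp) (hΩm : IsCompact Ωm)
    (hsubp : ∀ x ∈ Λ, subdiff up x ⊆ Ωp) (hsubm : ∀ x ∈ Λ, subdiff um x ⊆ Ωm)
    (a₀ d₀ : ℝ) (hd₀ : 0 < d₀)
    (hsepm : ∀ p ∈ Ωm, p (Fin.last n) < a₀ - d₀)
    (hsepp : ∀ p ∈ Ωp, a₀ + d₀ < p (Fin.last n)) :
    (∀ x' ∈ projPt '' Λ, ∀ s ∈ ({a₀ - d₀, a₀ + d₀} : Set ℝ),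
        BddAbove (Set.range fun t : ℝ =>
          t * s - max (up (snocPt x' t)) (um (snocPt x' t)))) ∧
    ConvexOn ℝ (projPt '' Λ) (fun x' => -(Lstar up um x' (a₀ - d₀)) / (2 * d₀)) ∧
    ConvexOn ℝ (projPt '' Λ) (fun x' => -(Lstar up um x' (a₀ + d₀)) / (2 * d₀)) := by
  have hbd : ∀ x' ∈ projPt '' Λ, ∀ s ∈ ({a₀ - d₀, a₀ + d₀} : Set ℝ),
      BddAbove (Set.range fun t : ℝ =>
        t * s - max (up (snocPt x' t)) (um (snocPt x' t))) := by
    rintro x' ⟨x, hxΛ, rfl⟩ s hs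
    simp only [Set.mem_insert_iff, Set.mem_singleton_iff] at hs
    have hls : a₀ - d₀ ≤ s := by rcases hs with rfl | rfl <;> linarith
    have hus : s ≤ a₀ + d₀ := by rcases hs with rfl | rfl <;> linarith
    obtain ⟨p, hp⟩ := exists_subgradient hup x
    obtain ⟨q, hq⟩ := exists_subgradient hum x
    have hpn : a₀ + d₀ < p (Fin.last n) := hsepp p (hsubp x hxΛ hp)
    have hqn : q (Fin.last n) < a₀ - d₀ := hsepm q (hsubm x hxΛ hq)
    set pn := p (Fin.last n) with hpn_def
    set qn := q (Fin.last n) with hqn_def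
    set t₀ := x (Fin.last n) with ht₀
    have hsnoc : snocPt (projPt x) t₀ = x := snocPt_projPt x
    have hpq : qn < pn := by linarith
    set lam := (s - qn) / (pn - qn) with hlam_def
    have hlam0 : 0 ≤ lam := div_nonneg (by linarith) (by linarith)
    have hlam1 : lam ≤ 1 := (div_le_one (by linarith)).2 (by linarith)
    have hsum : lam * pn + (1 - lam) * qn = s := by
      have h := div_mul_cancel₀ (s - qn) (show pn - qn ≠ 0 by linarith)
      rw [hlam_def]
      linear_combination h
    refine ⟨t₀ * s - (lam * up x + (1 - lam) * um x), ?_⟩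
    rintro v ⟨t, rfl⟩
    have hup_t : up x + pn * (t - t₀) ≤ up (snocPt (projPt x) t) := by
      have h := hp (snocPt (projPt x) t)
      rw [show snocPt (projPt x) t - x = snocPt (projPt x) t - snocPt (projPt x) t₀ from by
        rw [hsnoc], inner_snoc_sub] at h
      exact h
    have hum_t : um x + qn * (t - t₀) ≤ um (snocPt (projPt x) t) := by
      have h := hq (snocPt (projPt x) t)
      rw [show snocPt (projPt x) t - x = snocPt (projPt x) t - snocPt (projPt x) t₀ from by
        rw [hsnoc], inner_snoc_sub] at h
      exact h
    have hmax1 : up x + pn * (t - t₀)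
        ≤ max (up (snocPt (projPt x) t)) (um (snocPt (projPt x) t)) :=
      hup_t.trans (le_max_left _ _)
    have hmax2 : um x + qn * (t - t₀)
        ≤ max (up (snocPt (projPt x) t)) (um (snocPt (projPt x) t)) :=
      hum_t.trans (le_max_right _ _)
    have e1 : lam * (up x + pn * (t - t₀)) + (1 - lam) * (um x + qn * (t - t₀))
        = t * s - (t₀ * s - (lam * up x + (1 - lam) * um x)) := by
      linear_combination (t - t₀) * hsum
    have m1 := mul_le_mul_of_nonneg_left hmax1 hlam0
    have m2 := mul_le_mul_of_nonneg_left hmax2 (by linarith : (0:ℝ) ≤ 1 - lam)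
    show t * s - max (up (snocPt (projPt x) t)) (um (snocPt (projPt x) t))
      ≤ t₀ * s - (lam * up x + (1 - lam) * um x)
    linarith
  have hΛ' : Convex ℝ (projPt '' Λ) := by
    rintro _ ⟨x, hx, rfl⟩ _ ⟨y, hy, rfl⟩ a b ha hb hab
    refine ⟨a • x + b • y, hΛ hx hy ha hb hab, ?_⟩
    ext i
    simp [projPt]
  refine ⟨hbd, ?_, ?_⟩
  · exact convex_piece up um hup hum _ hΛ' _ d₀ hd₀
      (fun x' hx' => hbd x' hx' _ (by simp))
  · exact convex_piece up um hup hum _ hΛ' _ d₀ hd₀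
      (fun x' hx' => hbd x' hx' _ (by simp))
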